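/- Let d ≥ 1 and let μ be a probability measure on Ω satisfying GEMB(c) for some c > 0. Let f, g : Ω → ℝ be bounded measurable, let ψ : ℤ^d → [0,∞), let u, v ≥ 1 be real numbers with 1/u + 1/v = 3/2, and suppose that δ_i g ≤ (ψ * δf)(i) for every i ∈ ℤ^d, that 0 < ‖ψ‖_u < ∞ and 0 < ‖δf‖_v < ∞. Then for every real p ≥ 1, (∫ |g − ∫ g dμ|^p dμ)^{1/p} ≤ 2√c · (p Γ(p/2))^{1/p} · ‖ψ‖_u · ‖δf‖_v. -/

import Mathlib

open MeasureTheory Real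
open scoped ENNReal NNReal

noncomputable section

/-- The configuration space `Ω = {0,1}^{ℤ^d}`, encoded as functions `ℤ^d → Bool`,
with the product σ-algebra (the Borel σ-algebra of the product topology). -/
abbrev Config (d : ℕ) := (Fin d → ℤ) → Bool

/-- `flipAt i σ` is the configuration `σ^i` obtained from `σ` by flipping the spin at site `i`. -/
def flipAt {d : ℕ} (i : Fin d → ℤ) (σ : Config d) : Config d :=
  Function.update σ i (!σ i)

/-- The variation of `f` at site `i`: `δ_i f = sup_η (f(η^i) - f(η))`. -/
noncomputable def varAt {d : ℕ} (i : Fin d → ℤ) (f : Config d → ℝ) : ℝ :=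
  ⨆ η : Config d, (f (flipAt i η) - f η)

/-- `μ` satisfies the Gaussian exponential-moment bound GEMB(c). -/
def GEMB {d : ℕ} (μ : Measure (Config d)) (c : ℝ) : Prop :=
  ∀ h : Config d → ℝ, Measurable h → (∃ M, ∀ σ, |h σ| ≤ M) →
    Summable (fun i : Fin d → ℤ => varAt i h ^ 2) →
    ∫ σ, Real.exp (h σ - ∫ τ, h τ ∂μ) ∂μ ≤
      Real.exp (c * ∑' i : Fin d → ℤ, varAt i h ^ 2)

section Aux

variable {d : ℕ}

lemma flipAt_flipAt (i : Fin d → ℤ) (σ : Config d) : flipAt i (flipAt i σ) = σ := by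
  funext j
  by_cases h : j = i
  · subst h; simp [flipAt]
  · simp [flipAt, Function.update_of_ne h]

lemma bddAbove_var {f : Config d → ℝ} {M : ℝ} (hfb : ∀ σ, |f σ| ≤ M) (i : Fin d → ℤ) :
    BddAbove (Set.range fun η => f (flipAt i η) - f η) := by
  refine ⟨2 * M, ?_⟩
  rintro x ⟨η, rfl⟩
  have h1 := abs_le.mp (hfb (flipAt i η))
  have h2 := abs_le.mp (hfb η)
  simp only
  linarith [h1.2, h2.1]

lemma varAt_nonneg {f : Config d → ℝ} (hfb : ∃ M, ∀ σ, |f σ| ≤ M) (i : Fin d → ℤ) :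
    0 ≤ varAt i f := by
  obtain ⟨M, hM⟩ := hfb
  have hb := bddAbove_var hM i
  have σ : Config d := fun _ => false
  have h1 : f (flipAt i σ) - f σ ≤ varAt i f := le_ciSup hb σ
  have h2 : f σ - f (flipAt i σ) ≤ varAt i f := by
    have := le_ciSup hb (flipAt i σ)
    rwa [flipAt_flipAt] at this
  linarith

lemma varAt_smul {t : ℝ} (ht : 0 ≤ t) (f : Config d → ℝ) (i : Fin d → ℤ) :
    varAt i (fun σ => t * f σ) = t * varAt i f := by
  unfold varAt
  rw [Real.mul_iSup_of_nonneg ht]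
  exact iSup_congr fun η => by ring

lemma varAt_neg (f : Config d → ℝ) (i : Fin d → ℤ) :
    varAt i (fun σ => -(f σ)) = varAt i f := by
  unfold varAt
  have hr : (Set.range fun η => -f (flipAt i η) - -f η)
      = Set.range fun η => f (flipAt i η) - f η := by
    ext x
    constructor
    · rintro ⟨η, rfl⟩; exact ⟨flipAt i η, by simp only [flipAt_flipAt]; ring⟩
    · rintro ⟨η, rfl⟩; exact ⟨flipAt i η, by simp only [flipAt_flipAt]; ring⟩
  rw [iSup, iSup, hr]

lemma integrable_bdd {α : Type*} [MeasurableSpace α] (μ : Measure α) [IsFiniteMeasure μ]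
    {f : α → ℝ} (hf : Measurable f) {M : ℝ} (h : ∀ σ, |f σ| ≤ M) : Integrable f μ :=
  ⟨hf.aestronglyMeasurable,
    HasFiniteIntegral.of_bounded (C := M) (ae_of_all _ fun σ => by
      simpa [Real.norm_eq_abs] using h σ)⟩

lemma ofReal_tsum_le {ι : Type*} {f : ι → ℝ} (hf : ∀ i, 0 ≤ f i) :
    ENNReal.ofReal (∑' i, f i) ≤ ∑' i, ENNReal.ofReal (f i) := by
  by_cases h : Summable f
  · rw [ENNReal.ofReal_tsum_of_nonneg hf h]
  · rw [tsum_eq_zero_of_not_summable h]; simp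

lemma tsum_mul_le_Lp_Lq {ι : Type*} [Countable ι] (F G : ι → ℝ≥0∞) {p q : ℝ}
    (hpq : Real.HolderConjugate p q) :
    ∑' i, F i * G i ≤ (∑' i, F i ^ p) ^ (1/p) * (∑' i, G i ^ q) ^ (1/q) := by
  letI : MeasurableSpace ι := ⊤
  haveI : MeasurableSingletonClass ι := ⟨fun _ => MeasurableSpace.measurableSet_top⟩
  have h := ENNReal.lintegral_mul_le_Lp_mul_Lq (Measure.count : Measure ι) hpq
    (f := F) (g := G) (measurable_from_top.aemeasurable) (measurable_from_top.aemeasurable)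
  simpa [lintegral_count] using h

end Aux

lemma young_conv {ι : Type*} [AddCommGroup ι] [Countable ι] (Ψ A : ι → ℝ≥0∞)
    {u v : ℝ} (hu : 1 ≤ u) (hv : 1 ≤ v) (huv : 1/u + 1/v = 3/2) :
    ∑' i, (∑' k, Ψ (i - k) * A k) ^ (2:ℝ) ≤
      (∑' i, Ψ i ^ u) ^ (2/u) * (∑' i, A i ^ v) ^ (2/v) := by
  have hu0 : (0:ℝ) < u := lt_of_lt_of_le one_pos hu
  have hv0 : (0:ℝ) < v := lt_of_lt_of_le one_pos hv
  have hui : 1/u * u = 1 := by field_simp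
  have hvi : 1/v * v = 1 := by field_simp
  have hu2 : u ≤ 2 := by nlinarith [hv.trans_eq (one_div_one_div v).symm, hui, hvi,
    (show (1:ℝ)/v ≤ 1 by rw [div_le_one hv0]; exact hv)]
  have hv2 : v ≤ 2 := by nlinarith [(show (1:ℝ)/u ≤ 1 by rw [div_le_one hu0]; exact hu), hui, hvi]
  set P := ∑' i, Ψ i ^ u with hP
  set Q := ∑' i, A i ^ v with hQ
  have htransΨ : ∀ k : ι, ∑' i, Ψ (i - k) ^ u = P :=
    fun k => (Equiv.subRight k).tsum_eq fun j => Ψ j ^ u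
  have htransΨ' : ∀ i : ι, ∑' k, Ψ (i - k) ^ u = P :=
    fun i => (Equiv.subLeft i).tsum_eq fun j => Ψ j ^ u
  -- the second-factor bound
  have hT : ∀ i : ι, (∑' k, Ψ (i - k) ^ (2 - u) * A k ^ (2 - v))
      ≤ P ^ ((2-u)/u) * Q ^ ((2-v)/v) := by
    intro i
    by_cases hu2' : u = 2
    · have hv1 : v = 1 := by
        rw [hu2'] at huv
        have h1 : v⁻¹ = 1 := by norm_num at huv; linarith
        field_simp at h1; linarith
      subst hu2'; subst hv1
      simp only [sub_self, ENNReal.rpow_zero, one_mul, show (2:ℝ) - 1 = 1 by norm_num,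
        ENNReal.rpow_one]
      simp [hQ, ENNReal.rpow_one]
    by_cases hv2' : v = 2
    · have hu1 : u = 1 := by
        rw [hv2'] at huv
        have h1 : u⁻¹ = 1 := by norm_num at huv; linarith
        field_simp at h1; linarith
      subst hv2'; subst hu1
      simp only [sub_self, ENNReal.rpow_zero, mul_one, show (2:ℝ) - 1 = 1 by norm_num,
        ENNReal.rpow_one]
      have := htransΨ' i
      simp only [ENNReal.rpow_one] at this ⊢
      rw [this]
      simp
    · -- interior case
      have hult : u < 2 := lt_of_le_of_ne hu2 hu2'
      have hvlt : v < 2 := lt_of_le_of_ne hv2 hv2'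
      have h2u : (0:ℝ) < 2 - u := by linarith
      have h2v : (0:ℝ) < 2 - v := by linarith
      have hkey : 2*v + 2*u = 3*(u*v) := by
        field_simp at huv; linarith
      have hugt : 1 < u := by nlinarith
      have hconj : Real.HolderConjugate (u/(2-u)) (v/(2-v)) := by
        refine Real.holderConjugate_iff.mpr ⟨?_, ?_⟩
        · rw [lt_div_iff₀ h2u]; linarith
        · rw [inv_div, inv_div, div_add_div _ _ hu0.ne' hv0.ne', div_eq_one_iff_eq (by positivity)]
          ring_nf
          nlinarith [hkey]
      have hCS := tsum_mul_le_Lp_Lq (fun k => Ψ (i - k) ^ (2 - u)) (fun k => A k ^ (2 - v)) hconj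
      refine hCS.trans (le_of_eq ?_)
      rw [one_div_div, one_div_div]
      congr 1
      · rw [show (∑' k, (Ψ (i - k) ^ (2-u)) ^ (u/(2-u))) = P from ?_]
        refine (tsum_congr fun k => ?_).trans (htransΨ' i)
        rw [← ENNReal.rpow_mul]
        congr 1
        field_simp
      · rw [show (∑' k, (A k ^ (2-v)) ^ (v/(2-v))) = Q from ?_]
        refine tsum_congr fun k => ?_
        rw [← ENNReal.rpow_mul]
        congr 1
        field_simp
  -- double sum identity
  have hUPQ : ∑' i, ∑' k, Ψ (i - k) ^ u * A k ^ v = P * Q := by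
    rw [ENNReal.tsum_comm]
    calc ∑' k, ∑' i, Ψ (i - k) ^ u * A k ^ v
        = ∑' k, (∑' i, Ψ (i - k) ^ u) * A k ^ v :=
          tsum_congr fun k => ENNReal.tsum_mul_right
      _ = ∑' k, P * A k ^ v := tsum_congr fun k => by rw [htransΨ k]
      _ = P * Q := ENNReal.tsum_mul_left
  -- per-site squared bound
  have hstep : ∀ i : ι, (∑' k, Ψ (i - k) * A k) ^ (2:ℝ)
      ≤ (∑' k, Ψ (i - k) ^ u * A k ^ v) * (P ^ ((2-u)/u) * Q ^ ((2-v)/v)) := by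
    intro i
    have hCS := tsum_mul_le_Lp_Lq (fun k => Ψ (i - k) ^ (u/2) * A k ^ (v/2))
        (fun k => Ψ (i - k) ^ (1 - u/2) * A k ^ (1 - v/2))
        (Real.holderConjugate_iff.mpr ⟨one_lt_two, by norm_num⟩ : Real.HolderConjugate 2 2)
    have hdecomp : ∀ k, Ψ (i - k) * A k
        = (Ψ (i - k) ^ (u/2) * A k ^ (v/2)) * (Ψ (i - k) ^ (1 - u/2) * A k ^ (1 - v/2)) := by
      intro k
      rw [mul_mul_mul_comm, ← ENNReal.rpow_add_of_nonneg _ _ (by linarith) (by linarith),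
        ← ENNReal.rpow_add_of_nonneg _ _ (by linarith) (by linarith)]
      norm_num
    have e1 : ∀ k, (Ψ (i - k) ^ (u/2) * A k ^ (v/2)) ^ (2:ℝ) = Ψ (i - k) ^ u * A k ^ v := by
      intro k
      rw [ENNReal.mul_rpow_of_nonneg _ _ (by norm_num : (0:ℝ) ≤ 2), ← ENNReal.rpow_mul,
        ← ENNReal.rpow_mul, show u/2*2 = u by ring, show v/2*2 = v by ring]
    have e2 : ∀ k, (Ψ (i - k) ^ (1 - u/2) * A k ^ (1 - v/2)) ^ (2:ℝ)
        = Ψ (i - k) ^ (2 - u) * A k ^ (2 - v) := by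
      intro k
      rw [ENNReal.mul_rpow_of_nonneg _ _ (by norm_num : (0:ℝ) ≤ 2), ← ENNReal.rpow_mul,
        ← ENNReal.rpow_mul, show (1 - u/2)*2 = 2 - u by ring, show (1 - v/2)*2 = 2 - v by ring]
    simp only [e1, e2] at hCS
    calc (∑' k, Ψ (i - k) * A k) ^ (2:ℝ)
        ≤ ((∑' k, Ψ (i - k) ^ u * A k ^ v) ^ (1/(2:ℝ))
            * (∑' k, Ψ (i - k) ^ (2-u) * A k ^ (2-v)) ^ (1/(2:ℝ))) ^ (2:ℝ) := by
          apply ENNReal.rpow_le_rpow _ (by norm_num)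
          calc ∑' k, Ψ (i - k) * A k
              = ∑' k, (Ψ (i - k) ^ (u/2) * A k ^ (v/2))
                  * (Ψ (i - k) ^ (1 - u/2) * A k ^ (1 - v/2)) := tsum_congr hdecomp
            _ ≤ _ := hCS
      _ = (∑' k, Ψ (i - k) ^ u * A k ^ v)
            * (∑' k, Ψ (i - k) ^ (2-u) * A k ^ (2-v)) := by
          rw [ENNReal.mul_rpow_of_nonneg _ _ (by norm_num : (0:ℝ) ≤ 2), ← ENNReal.rpow_mul,
            ← ENNReal.rpow_mul]
          norm_num
      _ ≤ _ := mul_le_mul_right (hT i) _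
  calc ∑' i, (∑' k, Ψ (i - k) * A k) ^ (2:ℝ)
      ≤ ∑' i, (∑' k, Ψ (i - k) ^ u * A k ^ v) * (P ^ ((2-u)/u) * Q ^ ((2-v)/v)) :=
        ENNReal.tsum_le_tsum hstep
    _ = (∑' i, ∑' k, Ψ (i - k) ^ u * A k ^ v) * (P ^ ((2-u)/u) * Q ^ ((2-v)/v)) :=
        ENNReal.tsum_mul_right
    _ = (P * Q) * (P ^ ((2-u)/u) * Q ^ ((2-v)/v)) := by rw [hUPQ]
    _ = (P * P ^ ((2-u)/u)) * (Q * Q ^ ((2-v)/v)) := by ring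
    _ = P ^ (2/u) * Q ^ (2/v) := by
        rw [show (2:ℝ)/u = 1 + (2-u)/u by field_simp; ring,
          show (2:ℝ)/v = 1 + (2-v)/v by field_simp; ring,
          ENNReal.rpow_add_of_nonneg _ _ zero_le_one (div_nonneg (by linarith) hu0.le),
          ENNReal.rpow_add_of_nonneg _ _ zero_le_one (div_nonneg (by linarith) hv0.le),
          ENNReal.rpow_one, ENNReal.rpow_one]

lemma chernoff {d : ℕ} (μ : Measure (Config d)) [IsProbabilityMeasure μ]
    {c : ℝ} (hc : 0 < c) (hGEMB : GEMB μ c)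
    {g : Config d → ℝ} (hg : Measurable g) {M : ℝ} (hgb : ∀ σ, |g σ| ≤ M)
    {B : ℝ} (hB : 0 < B)
    (hsum : Summable fun i : Fin d → ℤ => varAt i g ^ 2)
    (hD : ∑' i : Fin d → ℤ, varAt i g ^ 2 ≤ B ^ 2)
    {t : ℝ} (ht : 0 < t) :
    μ {σ | t ≤ g σ - ∫ τ, g τ ∂μ} ≤ ENNReal.ofReal (Real.exp (-(t^2) / (4*c*B^2))) := by
  set m := ∫ τ, g τ ∂μ with hm
  set lam := t / (2*c*B^2) with hlam
  have hlam_pos : 0 < lam := div_pos ht (by positivity)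
  set h := fun σ => lam * g σ with hh
  have hhm : Measurable h := hg.const_mul lam
  have hM0 : 0 ≤ M := le_trans (abs_nonneg _) (hgb (fun _ => false))
  have hhb : ∀ σ, |h σ| ≤ lam * M := fun σ => by
    rw [hh, abs_mul, abs_of_pos hlam_pos]
    exact mul_le_mul_of_nonneg_left (hgb σ) hlam_pos.le
  have hvar : ∀ i, varAt i h = lam * varAt i g := fun i => varAt_smul hlam_pos.le g i
  have hsum2 : Summable fun i : Fin d → ℤ => varAt i h ^ 2 := by
    simp_rw [hvar, mul_pow]; exact hsum.mul_left _
  have hgemb := hGEMB h hhm ⟨lam * M, hhb⟩ hsum2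
  have hDs : ∑' i : Fin d → ℤ, varAt i h ^ 2 = lam^2 * ∑' i : Fin d → ℤ, varAt i g ^ 2 := by
    simp_rw [hvar, mul_pow]; exact tsum_mul_left
  have hgi : Integrable g μ := integrable_bdd μ hg hgb
  have hint : ∫ τ, h τ ∂μ = lam * m := by
    rw [hh, hm]; exact integral_const_mul lam g
  have key : ∫ σ, Real.exp (lam * (g σ - m)) ∂μ ≤ Real.exp (c * lam^2 * B^2) := by
    calc ∫ σ, Real.exp (lam * (g σ - m)) ∂μ
        = ∫ σ, Real.exp (h σ - ∫ τ, h τ ∂μ) ∂μ := by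
          rw [hint]; congr 1; funext σ; rw [hh]; ring_nf
      _ ≤ Real.exp (c * ∑' i : Fin d → ℤ, varAt i h ^ 2) := hgemb
      _ ≤ Real.exp (c * lam^2 * B^2) := by
          rw [hDs]
          apply Real.exp_le_exp.2
          rw [← mul_assoc]
          exact mul_le_mul_of_nonneg_left hD (by positivity)
  have hF : Measurable fun σ => Real.exp (lam * (g σ - m)) :=
    (((hg.sub measurable_const).const_mul lam).exp)
  have hFb : ∀ σ, |Real.exp (lam * (g σ - m))| ≤ Real.exp (lam * (M + |m|)) := by
    intro σ
    rw [abs_of_pos (Real.exp_pos _), Real.exp_le_exp]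
    have h1 := (abs_le.mp (hgb σ)).2
    have h2 : -m ≤ |m| := neg_le_abs m
    have : g σ - m ≤ M + |m| := by linarith
    exact mul_le_mul_of_nonneg_left this hlam_pos.le
  have hFi : Integrable (fun σ => Real.exp (lam * (g σ - m))) μ := integrable_bdd μ hF hFb
  have markov := mul_meas_ge_le_integral_of_nonneg
    (ae_of_all μ fun σ => (Real.exp_pos (lam * (g σ - m))).le) hFi (Real.exp (lam * t))
  have hset : {σ | Real.exp (lam * t) ≤ Real.exp (lam * (g σ - m))} = {σ | t ≤ g σ - m} := by
    ext σ
    simp only [Set.mem_setOf_eq, Real.exp_le_exp]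
    exact mul_le_mul_iff_right₀ hlam_pos
  rw [hset] at markov
  have h1 : (μ {σ | t ≤ g σ - m}).toReal ≤ Real.exp (c * lam^2 * B^2 - lam * t) := by
    rw [Real.exp_sub, le_div_iff₀ (Real.exp_pos _), mul_comm]
    exact markov.trans key
  have harith : c * lam^2 * B^2 - lam * t = -(t^2) / (4*c*B^2) := by
    rw [hlam]; field_simp; ring
  rw [harith] at h1
  exact (ENNReal.le_ofReal_iff_toReal_le (measure_ne_top μ _) (Real.exp_pos _).le).2 h1

/-- the `L^p` estimate of Corollary 3.2 of the paper:
if `μ` satisfies GEMB(c), `δg ≤ ψ * δf` pointwise, `1/u + 1/v = 3/2`, and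
`0 < ‖ψ‖_u < ∞`, `0 < ‖δf‖_v < ∞`, then for every real `p ≥ 1`,
`‖g - ∫ g dμ‖_{L^p(μ)} ≤ 2√c (p Γ(p/2))^{1/p} ‖ψ‖_u ‖δf‖_v`. -/
theorem gemb_Lp_bound {d : ℕ} (hd : 1 ≤ d)
    (μ : Measure (Config d)) [IsProbabilityMeasure μ]
    (c : ℝ) (hc : 0 < c) (hGEMB : GEMB μ c)
    (f g : Config d → ℝ) (hf : Measurable f) (hfb : ∃ M, ∀ σ, |f σ| ≤ M)
    (hg : Measurable g) (hgb : ∃ M, ∀ σ, |g σ| ≤ M)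
    (ψ : (Fin d → ℤ) → ℝ) (hψ0 : ∀ i, 0 ≤ ψ i)
    (hdom : ∀ i : Fin d → ℤ, varAt i g ≤ ∑' k : Fin d → ℤ, ψ (i - k) * varAt k f)
    (u v : ℝ) (hu : 1 ≤ u) (hv : 1 ≤ v) (huv : 1 / u + 1 / v = 3 / 2)
    (hψ : Summable (fun i : Fin d → ℤ => ψ i ^ u))
    (hψpos : 0 < ∑' i : Fin d → ℤ, ψ i ^ u)
    (hfv : Summable (fun i : Fin d → ℤ => varAt i f ^ v))
    (hfvpos : 0 < ∑' i : Fin d → ℤ, varAt i f ^ v)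
    (p : ℝ) (hp : 1 ≤ p) :
    (∫ σ, |g σ - ∫ τ, g τ ∂μ| ^ p ∂μ) ^ (1 / p) ≤
      2 * Real.sqrt c * (p * Real.Gamma (p / 2)) ^ (1 / p) *
        (∑' i : Fin d → ℤ, ψ i ^ u) ^ (1 / u) *
        (∑' i : Fin d → ℤ, varAt i f ^ v) ^ (1 / v) := by
  obtain ⟨Mg, hMg⟩ := hgb
  have hvf0 : ∀ k, 0 ≤ varAt k f := varAt_nonneg hfb
  have hvg0 : ∀ i, 0 ≤ varAt i g := varAt_nonneg ⟨Mg, hMg⟩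
  have hu0 : (0:ℝ) < u := lt_of_lt_of_le one_pos hu
  have hv0 : (0:ℝ) < v := lt_of_lt_of_le one_pos hv
  have hppos : (0:ℝ) < p := lt_of_lt_of_le one_pos hp
  set m := ∫ τ, g τ ∂μ with hm
  set realP := ∑' i : Fin d → ℤ, ψ i ^ u with hrealP
  set realQ := ∑' i : Fin d → ℤ, varAt i f ^ v with hrealQ
  set B := realP ^ (1/u) * realQ ^ (1/v) with hBdef
  have hBpos : 0 < B :=
    mul_pos (Real.rpow_pos_of_pos hψpos _) (Real.rpow_pos_of_pos hfvpos _)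
  have hPe : ∑' i : Fin d → ℤ, (ENNReal.ofReal (ψ i)) ^ u = ENNReal.ofReal realP := by
    rw [hrealP, ENNReal.ofReal_tsum_of_nonneg (fun i => Real.rpow_nonneg (hψ0 i) u) hψ]
    exact tsum_congr fun i => ENNReal.ofReal_rpow_of_nonneg (hψ0 i) hu0.le
  have hQe : ∑' i : Fin d → ℤ, (ENNReal.ofReal (varAt i f)) ^ v = ENNReal.ofReal realQ := by
    rw [hrealQ, ENNReal.ofReal_tsum_of_nonneg (fun i => Real.rpow_nonneg (hvf0 i) v) hfv]
    exact tsum_congr fun i => ENNReal.ofReal_rpow_of_nonneg (hvf0 i) hv0.le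
  have hyoung := young_conv (fun i => ENNReal.ofReal (ψ i))
    (fun k => ENNReal.ofReal (varAt k f)) hu hv huv
  rw [hPe, hQe] at hyoung
  set R := ENNReal.ofReal realP ^ (2/u) * ENNReal.ofReal realQ ^ (2/v) with hR
  have hRne : R ≠ ⊤ := by
    apply ENNReal.mul_ne_top
    · exact ENNReal.rpow_ne_top_of_nonneg (by positivity) ENNReal.ofReal_ne_top
    · exact ENNReal.rpow_ne_top_of_nonneg (by positivity) ENNReal.ofReal_ne_top
  have hdom' : ∀ i : Fin d → ℤ, ENNReal.ofReal (varAt i g ^ 2)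
      ≤ (∑' k : Fin d → ℤ, ENNReal.ofReal (ψ (i - k)) * ENNReal.ofReal (varAt k f)) ^ (2:ℝ) := by
    intro i
    have h1 : ENNReal.ofReal (varAt i g)
        ≤ ∑' k : Fin d → ℤ, ENNReal.ofReal (ψ (i - k)) * ENNReal.ofReal (varAt k f) := by
      refine le_trans (ENNReal.ofReal_le_ofReal (hdom i)) ?_
      refine le_trans (ofReal_tsum_le fun k => mul_nonneg (hψ0 _) (hvf0 k)) ?_
      exact le_of_eq (tsum_congr fun k => ENNReal.ofReal_mul (hψ0 _))
    calc ENNReal.ofReal (varAt i g ^ 2)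
        = ENNReal.ofReal (varAt i g ^ (2:ℝ)) := by rw [Real.rpow_two]
      _ = ENNReal.ofReal (varAt i g) ^ (2:ℝ) :=
          (ENNReal.ofReal_rpow_of_nonneg (hvg0 i) (by norm_num)).symm
      _ ≤ _ := ENNReal.rpow_le_rpow h1 (by norm_num)
  have hsumle : ∑' i : Fin d → ℤ, ENNReal.ofReal (varAt i g ^ 2) ≤ R :=
    le_trans (ENNReal.tsum_le_tsum hdom') hyoung
  have hsumne : ∑' i : Fin d → ℤ, ENNReal.ofReal (varAt i g ^ 2) ≠ ⊤ :=
    ne_top_of_le_ne_top hRne hsumle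
  have hsummable : Summable fun i : Fin d → ℤ => varAt i g ^ 2 := by
    have h2 := ENNReal.summable_toReal hsumne
    refine h2.congr fun i => ?_
    exact ENNReal.toReal_ofReal (sq_nonneg _)
  have hsq : ∀ (x : ℝ), 0 < x → ∀ w : ℝ, (x ^ (1/w)) ^ 2 = x ^ (2/w) := by
    intro x hx w
    rw [← Real.rpow_two, ← Real.rpow_mul hx.le, show 1/w*2 = 2/w by ring]
  have hRtoReal : R.toReal = B ^ 2 := by
    rw [hR, ENNReal.toReal_mul, ← ENNReal.toReal_rpow, ← ENNReal.toReal_rpow,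
      ENNReal.toReal_ofReal hψpos.le, ENNReal.toReal_ofReal hfvpos.le, hBdef, mul_pow,
      hsq realP hψpos u, hsq realQ hfvpos v]
  have hDle : ∑' i : Fin d → ℤ, varAt i g ^ 2 ≤ B ^ 2 := by
    have h1 : ∑' i : Fin d → ℤ, varAt i g ^ 2
        = (∑' i : Fin d → ℤ, ENNReal.ofReal (varAt i g ^ 2)).toReal := by
      rw [← ENNReal.ofReal_tsum_of_nonneg (fun i => sq_nonneg _) hsummable,
        ENNReal.toReal_ofReal (tsum_nonneg fun i => sq_nonneg _)]
    rw [h1, ← hRtoReal]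
    exact ENNReal.toReal_mono hRne hsumle
  have up : ∀ t : ℝ, 0 < t →
      μ {σ | t ≤ g σ - m} ≤ ENNReal.ofReal (Real.exp (-(t^2)/(4*c*B^2))) := by
    intro t ht
    exact chernoff μ hc hGEMB hg hMg hBpos hsummable hDle ht
  have hgneg : Measurable fun σ => -(g σ) := hg.neg
  have hgnegb : ∀ σ, |-(g σ)| ≤ Mg := fun σ => by rw [abs_neg]; exact hMg σ
  have hsummable' : Summable fun i : Fin d → ℤ => varAt i (fun σ => -(g σ)) ^ 2 := by
    simp_rw [varAt_neg g]; exact hsummable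
  have hDle' : ∑' i : Fin d → ℤ, varAt i (fun σ => -(g σ)) ^ 2 ≤ B ^ 2 := by
    simp_rw [varAt_neg g]; exact hDle
  have down : ∀ t : ℝ, 0 < t →
      μ {σ | t ≤ -(g σ - m)} ≤ ENNReal.ofReal (Real.exp (-(t^2)/(4*c*B^2))) := by
    intro t ht
    have h2 := chernoff μ hc hGEMB hgneg hgnegb hBpos hsummable' hDle' ht
    have hintneg : ∫ τ, -(g τ) ∂μ = -m := by rw [hm]; exact integral_neg g
    rw [hintneg] at h2
    have hseteq : {σ : Config d | t ≤ -(g σ) - -m} = {σ : Config d | t ≤ -(g σ - m)} := by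
      ext σ
      rw [Set.mem_setOf_eq, Set.mem_setOf_eq, show -(g σ) - -m = -(g σ - m) from by ring]
    rwa [hseteq] at h2
  have tail : ∀ t : ℝ, 0 < t →
      μ {σ | t < |g σ - m|} ≤ ENNReal.ofReal (2 * Real.exp (-(t^2)/(4*c*B^2))) := by
    intro t ht
    have hsub : {σ : Config d | t < |g σ - m|}
        ⊆ {σ : Config d | t ≤ g σ - m} ∪ {σ : Config d | t ≤ -(g σ - m)} := by
      intro σ hσ
      have hσ' : t < |g σ - m| := hσ
      rcases lt_abs.mp hσ' with h | h
      · exact Or.inl h.le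
      · exact Or.inr h.le
    calc μ {σ | t < |g σ - m|}
        ≤ μ ({σ : Config d | t ≤ g σ - m} ∪ {σ : Config d | t ≤ -(g σ - m)}) :=
          measure_mono hsub
      _ ≤ μ {σ : Config d | t ≤ g σ - m} + μ {σ : Config d | t ≤ -(g σ - m)} :=
          measure_union_le _ _
      _ ≤ ENNReal.ofReal (Real.exp (-(t^2)/(4*c*B^2)))
            + ENNReal.ofReal (Real.exp (-(t^2)/(4*c*B^2))) := add_le_add (up t ht) (down t ht)
      _ = ENNReal.ofReal (2 * Real.exp (-(t^2)/(4*c*B^2))) := by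
          rw [← ENNReal.ofReal_add (Real.exp_pos _).le (Real.exp_pos _).le, two_mul]
  set a := 4*c*B^2 with ha
  have hapos : 0 < a := by positivity
  have hXm : Measurable fun σ : Config d => |g σ - m| := (hg.sub measurable_const).abs
  have hXpm : Measurable fun σ : Config d => |g σ - m| ^ p :=
    (Real.continuous_rpow_const hppos.le).measurable.comp hXm
  have lc := lintegral_rpow_eq_lintegral_meas_lt_mul μ
    (f := fun σ : Config d => |g σ - m|) (ae_of_all _ fun σ => abs_nonneg _)
    hXm.aemeasurable hppos
  set G := fun t : ℝ => 2 * Real.exp (-(1/a) * t ^ 2) * t ^ (p-1) with hG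
  have hGeq : G = fun t : ℝ => 2 * (t ^ (p-1) * Real.exp (-(1/a) * t ^ 2)) := by
    funext t; rw [hG]; ring
  have hGbound : (∫⁻ t in Set.Ioi (0:ℝ), μ {σ | t < |g σ - m|} * ENNReal.ofReal (t ^ (p-1)))
      ≤ ∫⁻ t in Set.Ioi (0:ℝ), ENNReal.ofReal (G t) := by
    refine lintegral_mono_ae ?_
    filter_upwards [self_mem_ae_restrict measurableSet_Ioi] with t ht
    have ht' : (0:ℝ) < t := ht
    calc μ {σ | t < |g σ - m|} * ENNReal.ofReal (t ^ (p-1))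
        ≤ ENNReal.ofReal (2 * Real.exp (-(t^2)/a)) * ENNReal.ofReal (t ^ (p-1)) :=
          mul_le_mul_left (tail t ht') _
      _ = ENNReal.ofReal (G t) := by
          rw [← ENNReal.ofReal_mul (by positivity), hG, show -(t^2)/a = -(1/a)*t^2 by ring]
  have hGint : IntegrableOn G (Set.Ioi (0:ℝ)) := by
    rw [hGeq]
    exact (integrableOn_rpow_mul_exp_neg_mul_sq (show (0:ℝ) < 1/a by positivity)
      (show (-1:ℝ) < p - 1 by linarith)).const_mul 2
  have hGval : ∫ t in Set.Ioi (0:ℝ), G t = a ^ (p/2) * Real.Gamma (p/2) := by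
    rw [hGeq]
    rw [MeasureTheory.integral_const_mul]
    simp_rw [← Real.rpow_two]
    rw [integral_rpow_mul_exp_neg_mul_rpow (by norm_num : (0:ℝ) < 2)
      (show (-1:ℝ) < p - 1 by linarith) (show (0:ℝ) < 1/a by positivity)]
    rw [show p - 1 + 1 = p by ring]
    rw [one_div, Real.inv_rpow hapos.le, ← Real.rpow_neg hapos.le, neg_div, neg_neg]
    ring
  have hofG : (∫⁻ t in Set.Ioi (0:ℝ), ENNReal.ofReal (G t))
      = ENNReal.ofReal (a ^ (p/2) * Real.Gamma (p/2)) := by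
    rw [← ofReal_integral_eq_lintegral_ofReal hGint ?_, hGval]
    filter_upwards [self_mem_ae_restrict measurableSet_Ioi] with t ht
    have ht' : (0:ℝ) < t := ht
    rw [hG]; positivity
  have hΓ : 0 < Real.Gamma (p/2) := Real.Gamma_pos_of_pos (by positivity)
  have hK0 : 0 ≤ p * Real.Gamma (p/2) * a ^ (p/2) := by positivity
  have hInt : ∫ σ, |g σ - m| ^ p ∂μ ≤ p * Real.Gamma (p/2) * a ^ (p/2) := by
    rw [integral_eq_lintegral_of_nonneg_ae
      (ae_of_all _ fun σ => Real.rpow_nonneg (abs_nonneg _) p) hXpm.aestronglyMeasurable]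
    have hb : (∫⁻ σ, ENNReal.ofReal (|g σ - m| ^ p) ∂μ)
        ≤ ENNReal.ofReal (p * Real.Gamma (p/2) * a ^ (p/2)) := by
      rw [lc]
      calc ENNReal.ofReal p
            * ∫⁻ t in Set.Ioi (0:ℝ), μ {σ | t < |g σ - m|} * ENNReal.ofReal (t ^ (p-1))
          ≤ ENNReal.ofReal p * ENNReal.ofReal (a ^ (p/2) * Real.Gamma (p/2)) :=
            mul_le_mul_right (hGbound.trans (le_of_eq hofG)) _
        _ = ENNReal.ofReal (p * Real.Gamma (p/2) * a ^ (p/2)) := by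
            rw [← ENNReal.ofReal_mul hppos.le]
            congr 1
            ring
    calc (∫⁻ σ, ENNReal.ofReal (|g σ - m| ^ p) ∂μ).toReal
        ≤ (ENNReal.ofReal (p * Real.Gamma (p/2) * a ^ (p/2))).toReal :=
          ENNReal.toReal_mono ENNReal.ofReal_ne_top hb
      _ = _ := ENNReal.toReal_ofReal hK0
  have lhs_nonneg : 0 ≤ ∫ σ, |g σ - m| ^ p ∂μ :=
    integral_nonneg fun σ => Real.rpow_nonneg (abs_nonneg _) p
  have step := Real.rpow_le_rpow lhs_nonneg hInt (by positivity : (0:ℝ) ≤ 1/p)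
  refine le_trans step (le_of_eq ?_)
  have e1 : (p * Real.Gamma (p/2) * a ^ (p/2)) ^ (1/p)
      = (p * Real.Gamma (p/2)) ^ (1/p) * a ^ ((1:ℝ)/2) := by
    rw [Real.mul_rpow (by positivity) (by positivity), ← Real.rpow_mul hapos.le,
      show p/2 * (1/p) = 1/2 by field_simp]
  have e2 : a ^ ((1:ℝ)/2) = 2 * Real.sqrt c * B := by
    have h2 : (2 * Real.sqrt c * B) ^ 2 = a := by
      rw [mul_pow, mul_pow, Real.sq_sqrt hc.le, ha]; norm_num
    rw [← h2, ← Real.sqrt_eq_rpow, Real.sqrt_sq (by positivity)]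
  rw [e1, e2, hBdef]
  ring
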